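/- Let F denote the 3×3 real matrix F = [[0, 1, 0], [-1, 0, √10], [0, -√10, -6]]. Then for every t ∈ ℝ, exp(t·F) = e^{−3t}·I₃ + (e^{−2t} − e^{−3t})·(F + 3·I₃) + ((1/2)e^{−t} − e^{−2t} + (1/2)e^{−3t})·(F + 2·I₃)·(F + 3·I₃). -/

import Mathlib

set_option maxHeartbeats 1000000

open Matrix

lemma exp_smul_idem {𝔸 : Type*} [NormedRing 𝔸] [NormedAlgebra ℝ 𝔸] [CompleteSpace 𝔸]
    (P : 𝔸) (hP : P * P = P) (c : ℝ) :
    NormedSpace.exp (c • P) = 1 + (Real.exp c - 1) • P := by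
  have hpow : ∀ n : ℕ, P ^ (n + 1) = P := by
    intro n
    induction n with
    | zero => simp
    | succ n ih => rw [pow_succ, ih, hP]
  have hsum : Summable fun n : ℕ => ((Nat.factorial n : ℝ))⁻¹ • (c • P) ^ n :=
    NormedSpace.expSeries_summable' (c • P)
  simp only [NormedSpace.exp_eq_tsum ℝ]
  rw [hsum.tsum_eq_zero_add]
  have hreal : Summable fun n : ℕ => ((Nat.factorial n : ℝ))⁻¹ • c ^ n :=
    NormedSpace.expSeries_summable' (𝕂 := ℝ) c
  have hreal' : Summable fun n : ℕ => ((Nat.factorial (n+1) : ℝ))⁻¹ * c ^ (n + 1) := by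
    simpa [Function.comp_def] using hreal.comp_injective (Nat.succ_injective)
  have hexp : Real.exp c = ∑' n : ℕ, ((Nat.factorial n : ℝ))⁻¹ • c ^ n := by
    rw [Real.exp_eq_exp_ℝ, NormedSpace.exp_eq_tsum ℝ]
  have hsplit : Real.exp c = 1 + ∑' n : ℕ, ((Nat.factorial (n+1) : ℝ))⁻¹ * c ^ (n + 1) := by
    rw [hexp, hreal.tsum_eq_zero_add]; simp [smul_eq_mul]
  have key : (∑' n : ℕ, ((Nat.factorial (n+1) : ℝ))⁻¹ • (c • P) ^ (n + 1))
      = (∑' n : ℕ, ((Nat.factorial (n+1) : ℝ))⁻¹ * c ^ (n + 1)) • P := by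
    rw [← hreal'.tsum_smul_const]
    congr 1
    ext n
    rw [smul_pow, hpow, smul_smul]
  rw [key, show (∑' n : ℕ, ((Nat.factorial (n+1) : ℝ))⁻¹ * c ^ (n + 1)) = Real.exp c - 1 by
    linarith [hsplit]]
  simp

lemma matrix_exp_smul_idem (P : Matrix (Fin 3) (Fin 3) ℝ) (hP : P * P = P) (c : ℝ) :
    NormedSpace.exp (c • P) = 1 + (Real.exp c - 1) • P := by
  letI : SeminormedRing (Matrix (Fin 3) (Fin 3) ℝ) := Matrix.linftyOpSemiNormedRing
  letI : NormedRing (Matrix (Fin 3) (Fin 3) ℝ) := Matrix.linftyOpNormedRing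
  letI : NormedAlgebra ℝ (Matrix (Fin 3) (Fin 3) ℝ) := Matrix.linftyOpNormedAlgebra
  exact exp_smul_idem P hP c

theorem exp_smul_hold_drift (t : ℝ) :
    let F : Matrix (Fin 3) (Fin 3) ℝ :=
      !![0, 1, 0; -1, 0, Real.sqrt 10; 0, -Real.sqrt 10, -6]
    NormedSpace.exp (t • F)
      = Real.exp (-3 * t) • (1 : Matrix (Fin 3) (Fin 3) ℝ)
        + (Real.exp (-2 * t) - Real.exp (-3 * t)) • (F + 3 • (1 : Matrix (Fin 3) (Fin 3) ℝ))
        + ((1 / 2) * Real.exp (-t) - Real.exp (-2 * t) + (1 / 2) * Real.exp (-3 * t))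
            • ((F + 2 • (1 : Matrix (Fin 3) (Fin 3) ℝ))
                * (F + 3 • (1 : Matrix (Fin 3) (Fin 3) ℝ))) := by
  intro F
  set s : ℝ := Real.sqrt 10 with hs_def
  have hs : s * s = 10 := Real.mul_self_sqrt (by norm_num)
  have hs2 : s ^ 2 = 10 := by rw [pow_two]; exact hs
  set P1 : Matrix (Fin 3) (Fin 3) ℝ :=
    !![5/2, 5/2, s/2; -5/2, -5/2, -s/2; s/2, s/2, 1] with hP1_def
  set P2 : Matrix (Fin 3) (Fin 3) ℝ :=
    !![-2, -4, -s; 4, 8, 2*s; -s, -2*s, -5] with hP2_def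
  set P3 : Matrix (Fin 3) (Fin 3) ℝ :=
    !![1/2, 3/2, s/2; -3/2, -9/2, -3*s/2; s/2, 3*s/2, 5] with hP3_def
  have h11 : P1 * P1 = P1 := by
    ext i j; fin_cases i <;> fin_cases j <;>
      simp [hP1_def, Matrix.mul_apply, Fin.sum_univ_three] <;> ring_nf <;>
      linarith [hs2]
  have h22 : P2 * P2 = P2 := by
    ext i j; fin_cases i <;> fin_cases j <;>
      simp [hP2_def, Matrix.mul_apply, Fin.sum_univ_three] <;> ring_nf <;>
      linarith [hs2]
  have h33 : P3 * P3 = P3 := by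
    ext i j; fin_cases i <;> fin_cases j <;>
      simp [hP3_def, Matrix.mul_apply, Fin.sum_univ_three] <;> ring_nf <;>
      linarith [hs2]
  have h12 : P1 * P2 = 0 := by
    ext i j; fin_cases i <;> fin_cases j <;>
      simp [hP1_def, hP2_def, Matrix.mul_apply, Fin.sum_univ_three] <;> ring_nf <;>
      linarith [hs2]
  have h21 : P2 * P1 = 0 := by
    ext i j; fin_cases i <;> fin_cases j <;>
      simp [hP1_def, hP2_def, Matrix.mul_apply, Fin.sum_univ_three] <;> ring_nf <;>
      linarith [hs2]
  have h13 : P1 * P3 = 0 := by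
    ext i j; fin_cases i <;> fin_cases j <;>
      simp [hP1_def, hP3_def, Matrix.mul_apply, Fin.sum_univ_three] <;> ring_nf <;>
      linarith [hs2]
  have h31 : P3 * P1 = 0 := by
    ext i j; fin_cases i <;> fin_cases j <;>
      simp [hP1_def, hP3_def, Matrix.mul_apply, Fin.sum_univ_three] <;> ring_nf <;>
      linarith [hs2]
  have h23 : P2 * P3 = 0 := by
    ext i j; fin_cases i <;> fin_cases j <;>
      simp [hP2_def, hP3_def, Matrix.mul_apply, Fin.sum_univ_three] <;> ring_nf <;>
      linarith [hs2]
  have h32 : P3 * P2 = 0 := by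
    ext i j; fin_cases i <;> fin_cases j <;>
      simp [hP2_def, hP3_def, Matrix.mul_apply, Fin.sum_univ_three] <;> ring_nf <;>
      linarith [hs2]
  have h3one : (3:ℕ) • (1 : Matrix (Fin 3) (Fin 3) ℝ) = !![3,0,0;0,3,0;0,0,3] := by
    ext i j; fin_cases i <;> fin_cases j <;>
      simp [Matrix.smul_apply, Matrix.one_apply, Matrix.vecHead, Matrix.vecTail]
  have h2one : (2:ℕ) • (1 : Matrix (Fin 3) (Fin 3) ℝ) = !![2,0,0;0,2,0;0,0,2] := by
    ext i j; fin_cases i <;> fin_cases j <;>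
      simp [Matrix.smul_apply, Matrix.one_apply, Matrix.vecHead, Matrix.vecTail]
  have hone : (1 : Matrix (Fin 3) (Fin 3) ℝ) = P1 + P2 + P3 := by
    rw [hP1_def, hP2_def, hP3_def]
    ext i j; fin_cases i <;> fin_cases j <;>
      simp [Matrix.one_apply, Matrix.vecHead, Matrix.vecTail] <;> ring
  have hFP : F + 3 • (1 : Matrix (Fin 3) (Fin 3) ℝ) = 2 • P1 + P2 := by
    rw [h3one]
    ext i j; fin_cases i <;> fin_cases j <;>
      simp [F, hP1_def, hP2_def, Matrix.smul_apply, Matrix.vecHead, Matrix.vecTail] <;> ring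
  have hFP2 : (F + 2 • (1 : Matrix (Fin 3) (Fin 3) ℝ))
      * (F + 3 • (1 : Matrix (Fin 3) (Fin 3) ℝ)) = 2 • P1 := by
    rw [h3one, h2one]
    ext i j; fin_cases i <;> fin_cases j <;>
      simp [F, hP1_def, Matrix.mul_apply, Matrix.smul_apply, Matrix.vecHead, Matrix.vecTail, Fin.sum_univ_three] <;>
      ring_nf <;> linarith [hs2]
  have hd : t • F = (-t) • P1 + ((-2*t) • P2 + (-3*t) • P3) := by
    ext i j; fin_cases i <;> fin_cases j <;>
      simp [F, hP1_def, hP2_def, hP3_def, Matrix.smul_apply, Matrix.vecHead, Matrix.vecTail] <;> ring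
  have smul_mul_zero : ∀ (x y : ℝ) (A B : Matrix (Fin 3) (Fin 3) ℝ), A * B = 0 →
      (x • A) * (y • B) = 0 := by
    intro x y A B h
    rw [smul_mul_assoc, mul_smul_comm, h, smul_zero, smul_zero]
  have c23 : Commute ((-2*t) • P2) ((-3*t) • P3) := by
    unfold Commute SemiconjBy
    rw [smul_mul_zero _ _ _ _ h23, smul_mul_zero _ _ _ _ h32]
  have c1_23 : Commute ((-t) • P1) ((-2*t) • P2 + (-3*t) • P3) := by
    unfold Commute SemiconjBy
    rw [mul_add, add_mul, smul_mul_zero _ _ _ _ h12, smul_mul_zero _ _ _ _ h13,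
      smul_mul_zero _ _ _ _ h21, smul_mul_zero _ _ _ _ h31]
  rw [hd, _root_.Matrix.exp_add_of_commute _ _ c1_23,
    _root_.Matrix.exp_add_of_commute _ _ c23,
    matrix_exp_smul_idem _ h11, matrix_exp_smul_idem _ h22, matrix_exp_smul_idem _ h33]
  have expand : ∀ a b c : ℝ,
      (1 + a • P1) * ((1 + b • P2) * (1 + c • P3)) = 1 + a • P1 + b • P2 + c • P3 := by
    intro a b c
    simp only [mul_add, add_mul, one_mul, mul_one, smul_mul_assoc, mul_smul_comm,
      h12, h13, h23, smul_zero, add_zero]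
    try abel
  rw [expand, hFP2, hFP, hone]
  module
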